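/- For a point p = (x,y,z) in Z^3, the 18-neighbor graph distance from the origin to p equals max{ max(|x|,|y|,|z|), ⌈(|x|+|y|+|z|)/2⌉ }. -/

import Mathlib

/-- Two points of `ℤ³` are 18-neighbors: distinct, each coordinate differs by at most 1,
and the sum of absolute coordinate differences is at most 2. -/
def Adj18 (p q : ℤ × ℤ × ℤ) : Prop :=
  p ≠ q ∧ (p.1 - q.1).natAbs ≤ 1 ∧ (p.2.1 - q.2.1).natAbs ≤ 1 ∧ (p.2.2 - q.2.2).natAbs ≤ 1 ∧
    (p.1 - q.1).natAbs + (p.2.1 - q.2.1).natAbs + (p.2.2 - q.2.2).natAbs ≤ 2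

/-- `f` is an 18-neighbor path of length `n` from `p` to `q`. -/
def IsPath18 (n : ℕ) (f : Fin (n + 1) → ℤ × ℤ × ℤ) (p q : ℤ × ℤ × ℤ) : Prop :=
  f 0 = p ∧ f (Fin.last n) = q ∧ ∀ t : Fin n, Adj18 (f t.castSucc) (f t.succ)

/-- The 18-neighbor graph distance: the least length of an 18-neighbor path. -/
noncomputable def dist18 (p q : ℤ × ℤ × ℤ) : ℕ :=
  sInf {n : ℕ | ∃ f : Fin (n + 1) → ℤ × ℤ × ℤ, IsPath18 n f p q}

/-- The 18-neighbor graph distance from the origin to `(x,y,z)` equals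
`max{max(|x|,|y|,|z|), ⌈(|x|+|y|+|z|)/2⌉}`. -/
def g18 (x y z : ℤ) : ℕ :=
  max (max x.natAbs (max y.natAbs z.natAbs)) ((x.natAbs + y.natAbs + z.natAbs + 1) / 2)

lemma dec18 (x : ℤ) (hx : x ≠ 0) :
    ∃ x' : ℤ, (x' - x).natAbs = 1 ∧ x'.natAbs + 1 = x.natAbs := by
  rcases lt_or_gt_of_ne hx with h | h
  · exact ⟨x + 1, by omega, by omega⟩
  · exact ⟨x - 1, by omega, by omega⟩

set_option maxHeartbeats 4000000 in
lemma step18 (x y z : ℤ) (h : ¬(x = 0 ∧ y = 0 ∧ z = 0)) :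
    ∃ x' y' z', Adj18 (x', y', z') (x, y, z) ∧ g18 x' y' z' + 1 = g18 x y z := by
  have hd : x ≠ 0 ∨ y ≠ 0 ∨ z ≠ 0 := by tauto
  rcases Nat.le_total x.natAbs y.natAbs with h1 | h1 <;>
    rcases Nat.le_total y.natAbs z.natAbs with h2 | h2 <;>
    rcases Nat.le_total x.natAbs z.natAbs with h3 | h3
  · have hb : z ≠ 0 := by omega
    obtain ⟨z', hb1, hb2⟩ := dec18 z hb
    rcases eq_or_ne y 0 with hs | hs
    · refine ⟨x, y, z', ⟨?_, ?_, ?_, ?_, ?_⟩, ?_⟩ <;> dsimp -failIfUnchanged only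
      · simp only [ne_eq, Prod.mk.injEq]; omega
      · omega
      · omega
      · omega
      · omega
      · clear hd h hb hb1; simp only [g18]; omega
    · obtain ⟨y', hs1, hs2⟩ := dec18 y hs
      refine ⟨x, y', z', ⟨?_, ?_, ?_, ?_, ?_⟩, ?_⟩ <;> dsimp -failIfUnchanged only
      · simp only [ne_eq, Prod.mk.injEq]; omega
      · omega
      · omega
      · omega
      · omega
      · clear hd h hb hb1 hs hs1; simp only [g18]; omega
  · have hb : z ≠ 0 := by omega
    obtain ⟨z', hb1, hb2⟩ := dec18 z hb
    rcases eq_or_ne y 0 with hs | hs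
    · refine ⟨x, y, z', ⟨?_, ?_, ?_, ?_, ?_⟩, ?_⟩ <;> dsimp -failIfUnchanged only
      · simp only [ne_eq, Prod.mk.injEq]; omega
      · omega
      · omega
      · omega
      · omega
      · clear hd h hb hb1; simp only [g18]; omega
    · obtain ⟨y', hs1, hs2⟩ := dec18 y hs
      refine ⟨x, y', z', ⟨?_, ?_, ?_, ?_, ?_⟩, ?_⟩ <;> dsimp -failIfUnchanged only
      · simp only [ne_eq, Prod.mk.injEq]; omega
      · omega
      · omega
      · omega
      · omega
      · clear hd h hb hb1 hs hs1; simp only [g18]; omega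
  · have hb : y ≠ 0 := by omega
    obtain ⟨y', hb1, hb2⟩ := dec18 y hb
    rcases eq_or_ne z 0 with hs | hs
    · refine ⟨x, y', z, ⟨?_, ?_, ?_, ?_, ?_⟩, ?_⟩ <;> dsimp -failIfUnchanged only
      · simp only [ne_eq, Prod.mk.injEq]; omega
      · omega
      · omega
      · omega
      · omega
      · clear hd h hb hb1; simp only [g18]; omega
    · obtain ⟨z', hs1, hs2⟩ := dec18 z hs
      refine ⟨x, y', z', ⟨?_, ?_, ?_, ?_, ?_⟩, ?_⟩ <;> dsimp -failIfUnchanged only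
      · simp only [ne_eq, Prod.mk.injEq]; omega
      · omega
      · omega
      · omega
      · omega
      · clear hd h hb hb1 hs hs1; simp only [g18]; omega
  · have hb : y ≠ 0 := by omega
    obtain ⟨y', hb1, hb2⟩ := dec18 y hb
    rcases eq_or_ne x 0 with hs | hs
    · refine ⟨x, y', z, ⟨?_, ?_, ?_, ?_, ?_⟩, ?_⟩ <;> dsimp -failIfUnchanged only
      · simp only [ne_eq, Prod.mk.injEq]; omega
      · omega
      · omega
      · omega
      · omega
      · clear hd h hb hb1; simp only [g18]; omega
    · obtain ⟨x', hs1, hs2⟩ := dec18 x hs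
      refine ⟨x', y', z, ⟨?_, ?_, ?_, ?_, ?_⟩, ?_⟩ <;> dsimp -failIfUnchanged only
      · simp only [ne_eq, Prod.mk.injEq]; omega
      · omega
      · omega
      · omega
      · omega
      · clear hd h hb hb1 hs hs1; simp only [g18]; omega
  · have hb : z ≠ 0 := by omega
    obtain ⟨z', hb1, hb2⟩ := dec18 z hb
    rcases eq_or_ne x 0 with hs | hs
    · refine ⟨x, y, z', ⟨?_, ?_, ?_, ?_, ?_⟩, ?_⟩ <;> dsimp -failIfUnchanged only
      · simp only [ne_eq, Prod.mk.injEq]; omega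
      · omega
      · omega
      · omega
      · omega
      · clear hd h hb hb1; simp only [g18]; omega
    · obtain ⟨x', hs1, hs2⟩ := dec18 x hs
      refine ⟨x', y, z', ⟨?_, ?_, ?_, ?_, ?_⟩, ?_⟩ <;> dsimp -failIfUnchanged only
      · simp only [ne_eq, Prod.mk.injEq]; omega
      · omega
      · omega
      · omega
      · omega
      · clear hd h hb hb1 hs hs1; simp only [g18]; omega
  · have hb : x ≠ 0 := by omega
    obtain ⟨x', hb1, hb2⟩ := dec18 x hb
    rcases eq_or_ne z 0 with hs | hs
    · refine ⟨x', y, z, ⟨?_, ?_, ?_, ?_, ?_⟩, ?_⟩ <;> dsimp -failIfUnchanged only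
      · simp only [ne_eq, Prod.mk.injEq]; omega
      · omega
      · omega
      · omega
      · omega
      · clear hd h hb hb1; simp only [g18]; omega
    · obtain ⟨z', hs1, hs2⟩ := dec18 z hs
      refine ⟨x', y, z', ⟨?_, ?_, ?_, ?_, ?_⟩, ?_⟩ <;> dsimp -failIfUnchanged only
      · simp only [ne_eq, Prod.mk.injEq]; omega
      · omega
      · omega
      · omega
      · omega
      · clear hd h hb hb1 hs hs1; simp only [g18]; omega
  · have hb : z ≠ 0 := by omega
    obtain ⟨z', hb1, hb2⟩ := dec18 z hb
    rcases eq_or_ne y 0 with hs | hs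
    · refine ⟨x, y, z', ⟨?_, ?_, ?_, ?_, ?_⟩, ?_⟩ <;> dsimp -failIfUnchanged only
      · simp only [ne_eq, Prod.mk.injEq]; omega
      · omega
      · omega
      · omega
      · omega
      · clear hd h hb hb1; simp only [g18]; omega
    · obtain ⟨y', hs1, hs2⟩ := dec18 y hs
      refine ⟨x, y', z', ⟨?_, ?_, ?_, ?_, ?_⟩, ?_⟩ <;> dsimp -failIfUnchanged only
      · simp only [ne_eq, Prod.mk.injEq]; omega
      · omega
      · omega
      · omega
      · omega
      · clear hd h hb hb1 hs hs1; simp only [g18]; omega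
  · have hb : x ≠ 0 := by omega
    obtain ⟨x', hb1, hb2⟩ := dec18 x hb
    rcases eq_or_ne y 0 with hs | hs
    · refine ⟨x', y, z, ⟨?_, ?_, ?_, ?_, ?_⟩, ?_⟩ <;> dsimp -failIfUnchanged only
      · simp only [ne_eq, Prod.mk.injEq]; omega
      · omega
      · omega
      · omega
      · omega
      · clear hd h hb hb1; simp only [g18]; omega
    · obtain ⟨y', hs1, hs2⟩ := dec18 y hs
      refine ⟨x', y', z, ⟨?_, ?_, ?_, ?_, ?_⟩, ?_⟩ <;> dsimp -failIfUnchanged only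
      · simp only [ne_eq, Prod.mk.injEq]; omega
      · omega
      · omega
      · omega
      · omega
      · clear hd h hb hb1 hs hs1; simp only [g18]; omega

lemma path18_exists (n : ℕ) : ∀ x y z : ℤ, g18 x y z = n →
    ∃ f : Fin (n + 1) → ℤ × ℤ × ℤ, IsPath18 n f (0, 0, 0) (x, y, z) := by
  induction n with
  | zero =>
    intro x y z hg
    have hx : x = 0 ∧ y = 0 ∧ z = 0 := by
      simp only [g18, Nat.max_def] at hg; split_ifs at hg <;> omega
    obtain ⟨rfl, rfl, rfl⟩ := hx
    exact ⟨fun _ => (0, 0, 0), rfl, rfl, fun t => t.elim0⟩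
  | succ n ih =>
    intro x y z hg
    have hne : ¬(x = 0 ∧ y = 0 ∧ z = 0) := by
      rintro ⟨rfl, rfl, rfl⟩
      simp [g18] at hg
    obtain ⟨x', y', z', hadj, hg'⟩ := step18 x y z hne
    obtain ⟨f, hf0, hfl, hfa⟩ := ih x' y' z' (by omega)
    refine ⟨Fin.snoc f (x, y, z), ?_, ?_, ?_⟩
    · rw [show (0 : Fin (n + 2)) = Fin.castSucc 0 by rfl, Fin.snoc_castSucc]; exact hf0
    · simp [Fin.snoc_last]
    · intro t
      refine Fin.lastCases ?_ ?_ t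
      · rw [show (Fin.last n).succ = Fin.last (n+1) by rfl, Fin.snoc_castSucc, Fin.snoc_last, hfl]
        exact hadj
      · intro s
        rw [Fin.succ_castSucc, Fin.snoc_castSucc, Fin.snoc_castSucc]
        exact hfa s

lemma gmax_le (A B C A' B' C' : ℕ) (h1 : A' ≤ A + 1) (h2 : B' ≤ B + 1) (h3 : C' ≤ C + 1)
    (h4 : A' + B' + C' ≤ A + B + C + 2) :
    max (max A' (max B' C')) ((A' + B' + C' + 1) / 2)
      ≤ max (max A (max B C)) ((A + B + C + 1) / 2) + 1 := by
  omega

lemma adj18_g (p q : ℤ × ℤ × ℤ) (h : Adj18 p q) :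
    g18 q.1 q.2.1 q.2.2 ≤ g18 p.1 p.2.1 p.2.2 + 1 := by
  obtain ⟨-, h1, h2, h3, h4⟩ := h
  have a1 : q.1.natAbs ≤ p.1.natAbs + 1 := by omega
  have a2 : q.2.1.natAbs ≤ p.2.1.natAbs + 1 := by omega
  have a3 : q.2.2.natAbs ≤ p.2.2.natAbs + 1 := by omega
  have a4 : q.1.natAbs + q.2.1.natAbs + q.2.2.natAbs
      ≤ p.1.natAbs + p.2.1.natAbs + p.2.2.natAbs + 2 := by omega
  simp only [g18]
  exact gmax_le _ _ _ _ _ _ a1 a2 a3 a4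

lemma path18_lb (n : ℕ) (f : Fin (n + 1) → ℤ × ℤ × ℤ) (x y z : ℤ)
    (hf : IsPath18 n f (0, 0, 0) (x, y, z)) : g18 x y z ≤ n := by
  obtain ⟨hf0, hfl, hfa⟩ := hf
  have key : ∀ k : Fin (n + 1), g18 (f k).1 (f k).2.1 (f k).2.2 ≤ k.val := by
    intro k
    induction k using Fin.induction with
    | zero => rw [hf0]; simp [g18]
    | succ s ihs =>
      have := adj18_g _ _ (hfa s)
      have hc : (s.castSucc : ℕ) = (s : ℕ) := rfl
      simp only [Fin.val_succ]
      omega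
  have := key (Fin.last n)
  rw [hfl] at this
  simpa using this

theorem dist18_eq (x y z : ℤ) :
    dist18 (0, 0, 0) (x, y, z) =
      max (max x.natAbs (max y.natAbs z.natAbs))
        ((x.natAbs + y.natAbs + z.natAbs + 1) / 2) := by
  have hmem : g18 x y z ∈ {n : ℕ | ∃ f : Fin (n + 1) → ℤ × ℤ × ℤ, IsPath18 n f (0,0,0) (x,y,z)} :=
    path18_exists _ x y z rfl
  have hub : dist18 (0, 0, 0) (x, y, z) ≤ g18 x y z := Nat.sInf_le hmem
  have hlb : g18 x y z ≤ dist18 (0, 0, 0) (x, y, z) := by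
    obtain ⟨f, hf⟩ := Nat.sInf_mem ⟨_, hmem⟩
    exact path18_lb _ f x y z hf
  have : dist18 (0, 0, 0) (x, y, z) = g18 x y z := le_antisymm hub hlb
  rw [this]; rfl
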